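/- Let T_0 = {X_i ⊑ ∃r.X_{i+1} ⊓ ∃s.X_{i+1} : 0 ≤ i < n} over concept names X_0,...,X_n and role names r, s. For any 0 ≤ i ≤ n and any concept expression D over the signature {X_0,...,X_n,r,s} (plus possibly other concept names M, A, A_j, B_j): if T_0 ⊭ X_i ⊑ D, then there exists a sequence of role names t_1,...,t_l ∈ {r,s} with 0 ≤ l ≤ n − i + 1, and Y either ⊤ or a concept name, such that ∅ ⊨ D ⊑ ∃t_1...∃t_l.Y and T_0 ⊭ X_i ⊑ ∃t_1...∃t_l.Y. -/

import Mathlib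

/-- EL concept expressions over concept names `C` and role names `R`. -/
inductive ELC (C R : Type) : Type where
  | top : ELC C R
  | cn : C → ELC C R
  | conj : ELC C R → ELC C R → ELC C R
  | ex : R → ELC C R → ELC C R

/-- An interpretation. -/
structure Interp (C R : Type) where
  dom : Type
  cname : C → Set dom
  rname : R → Set (dom × dom)

/-- Semantics of EL concept expressions. -/
def Interp.sem {C R : Type} (I : Interp C R) : ELC C R → Set I.dom
  | .top => Set.univ
  | .cn A => I.cname A
  | .conj c d => I.sem c ∩ I.sem d
  | .ex r c => {x | ∃ y, (x, y) ∈ I.rname r ∧ y ∈ I.sem c}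

/-- The pairwise distinct concept names `A`, `M`, `X_i`, `A_i`, `B_i`. -/
inductive CN : Type where
  | A : CN
  | M : CN
  | X : ℕ → CN
  | Ai : ℕ → CN
  | Bi : ℕ → CN

/-- The two distinct role names `r` and `s`. -/
inductive RN : Type where
  | r : RN
  | s : RN

/-- `∃σ.C` for a word `σ` over `{r,s}`: nested existential restrictions. -/
def exSeq (w : List RN) (c : ELC CN RN) : ELC CN RN :=
  w.foldr ELC.ex c

/-- Conjunction of a list of concepts (`⊤` for the empty list). -/
def conjList (l : List (ELC CN RN)) : ELC CN RN :=
  l.foldr ELC.conj .top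

/-- The TBox `T_0 = {X_i ⊑ ∃r.X_{i+1} ⊓ ∃s.X_{i+1} : 0 ≤ i < n}`. -/
def T0 (n : ℕ) : List (ELC CN RN × ELC CN RN) :=
  (List.range n).map fun i =>
    (.cn (.X i), .conj (.ex .r (.cn (.X (i + 1)))) (.ex .s (.cn (.X (i + 1)))))

/-- The concept `X_0 ⊓ ∃σ_1.M ⊓ … ⊓ ∃σ_n.M`. -/
def bigA (n : ℕ) (L : Fin n → List RN) : ELC CN RN :=
  .conj (.cn (.X 0)) (conjList ((List.finRange n).map fun i => exSeq (L i) (.cn .M)))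

/-- The TBox `T_L`: `T_0` together with `A_i ⊑ ∃σ_i.M ⊓ X_0`,
`B_i ⊑ ∃σ_i.M ⊓ X_0` and the equivalence
`A ≡ X_0 ⊓ ∃σ_1.M ⊓ … ⊓ ∃σ_n.M` (given as two inclusions). -/
def TL (n : ℕ) (L : Fin n → List RN) : List (ELC CN RN × ELC CN RN) :=
  T0 n ++
  ((List.finRange n).map fun i =>
    (.cn (.Ai i.1), .conj (exSeq (L i) (.cn .M)) (.cn (.X 0)))) ++
  ((List.finRange n).map fun i =>
    (.cn (.Bi i.1), .conj (exSeq (L i) (.cn .M)) (.cn (.X 0)))) ++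
  [(.cn .A, bigA n L), (bigA n L, .cn .A)]

/-- `T ⊨ c ⊑ d`: the inclusion holds in every model of the TBox `T`. -/
def Entails (T : List (ELC CN RN × ELC CN RN)) (c d : ELC CN RN) : Prop :=
  ∀ I : Interp CN RN, (∀ p ∈ T, I.sem p.1 ⊆ I.sem p.2) → I.sem c ⊆ I.sem d



/-- Canonical model for `T0 n`: domain `ℕ`, node `j` satisfies exactly `X j`,
both roles link `j` to `j+1` when `j < n`. -/
def canI (n : ℕ) : Interp CN RN where
  dom := ℕ
  cname := fun a => match a with | .X k => {k} | _ => ∅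
  rname := fun _ => {p | p.2 = p.1 + 1 ∧ p.1 < n}

lemma canI_model (n : ℕ) : ∀ p ∈ T0 n, (canI n).sem p.1 ⊆ (canI n).sem p.2 := by
  intro p hp
  simp only [T0, List.mem_map, List.mem_range] at hp
  obtain ⟨k, hk, rfl⟩ := hp
  intro x hx
  have hxk : x = k := hx
  exact ⟨⟨k + 1, ⟨by rw [hxk]; rfl, by rw [hxk]; exact hk⟩, rfl⟩,
    ⟨k + 1, ⟨by rw [hxk]; rfl, by rw [hxk]; exact hk⟩, rfl⟩⟩

lemma canI_forward (n : ℕ) (D : ELC CN RN) : ∀ j, j ≤ n → j ∈ (canI n).sem D →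
    Entails (T0 n) (.cn (.X j)) D := by
  induction D with
  | top => intro j _ _ I _ x _; trivial
  | cn a =>
    intro j hj hmem
    match a with
    | .X k =>
      have hjk : j = k := hmem
      subst hjk
      intro I _ x hx; exact hx
    | .A => exact hmem.elim
    | .M => exact hmem.elim
    | .Ai k => exact hmem.elim
    | .Bi k => exact hmem.elim
  | conj c d ihc ihd =>
    intro j hj hmem
    intro I hI x hx
    exact ⟨ihc j hj hmem.1 I hI hx, ihd j hj hmem.2 I hI hx⟩
  | ex t c ih =>
    intro j hj hmem
    obtain ⟨y, ⟨hy1, hy2⟩, hyc⟩ := hmem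
    have hy1' : y = j + 1 := hy1
    subst hy1'
    replace hy2 : j < n := hy2
    intro I hI x hx
    have hax : ((.cn (.X j) : ELC CN RN),
        (.conj (.ex .r (.cn (.X (j+1)))) (.ex .s (.cn (.X (j+1)))) : ELC CN RN)) ∈ T0 n := by
      simp only [T0, List.mem_map, List.mem_range]
      exact ⟨j, hy2, rfl⟩
    obtain ⟨hr, hs⟩ := hI _ hax hx
    cases t with
    | r =>
      obtain ⟨y, hxy, hyX⟩ := hr
      exact ⟨y, hxy, ih (j+1) hy2 hyc I hI hyX⟩
    | s =>
      obtain ⟨y, hxy, hyX⟩ := hs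
      exact ⟨y, hxy, ih (j+1) hy2 hyc I hI hyX⟩

lemma canI_backward (n : ℕ) (D : ELC CN RN) : ∀ j, j ≤ n → j ∉ (canI n).sem D →
    ∃ (ts : List RN) (Y : ELC CN RN), ts.length ≤ n - j + 1 ∧
      (Y = .top ∨ ∃ a : CN, Y = .cn a) ∧
      Entails [] D (exSeq ts Y) ∧ j ∉ (canI n).sem (exSeq ts Y) := by
  induction D with
  | top => intro j _ hmem; exact absurd trivial hmem
  | cn a =>
    intro j _ hmem
    exact ⟨[], .cn a, by simp, Or.inr ⟨a, rfl⟩, fun I _ x hx => hx, hmem⟩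
  | conj c d ihc ihd =>
    intro j hj hmem
    by_cases hc : j ∈ (canI n).sem c
    · have hd : j ∉ (canI n).sem d := fun hd => hmem ⟨hc, hd⟩
      obtain ⟨ts, Y, h1, h2, h3, h4⟩ := ihd j hj hd
      exact ⟨ts, Y, h1, h2, fun I hI x hx => h3 I hI hx.2, h4⟩
    · obtain ⟨ts, Y, h1, h2, h3, h4⟩ := ihc j hj hc
      exact ⟨ts, Y, h1, h2, fun I hI x hx => h3 I hI hx.1, h4⟩
  | ex t c ih =>
    intro j hj hmem
    rcases lt_or_eq_of_le hj with hlt | heq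
    · have hnot : j + 1 ∉ (canI n).sem c := fun hc => hmem ⟨j + 1, ⟨rfl, hlt⟩, hc⟩
      obtain ⟨ts, Y, h1, h2, h3, h4⟩ := ih (j + 1) hlt hnot
      refine ⟨t :: ts, Y, ?_, h2, ?_, ?_⟩
      · simp only [List.length_cons]; omega
      · intro I hI x hx
        obtain ⟨y, hxy, hyc⟩ := hx
        exact ⟨y, hxy, h3 I hI hyc⟩
      · rintro ⟨y, ⟨hy1, _⟩, hyE⟩
        have hy1' : y = j + 1 := hy1
        subst hy1'
        exact h4 hyE
    · subst heq
      refine ⟨[t], .top, by simp, Or.inl rfl, ?_, ?_⟩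
      · intro I hI x hx
        obtain ⟨y, hxy, _⟩ := hx
        exact ⟨y, hxy, trivial⟩
      · rintro ⟨y, ⟨_, hlt⟩, _⟩
        exact absurd hlt (lt_irrefl _)

/-- if `T_0 ⊭ X_i ⊑ D`, then there is a word `t_1…t_l` over
`{r,s}` with `l ≤ n − i + 1` and `Y` either `⊤` or a concept name such that
`∅ ⊨ D ⊑ ∃t_1…∃t_l.Y` and `T_0 ⊭ X_i ⊑ ∃t_1…∃t_l.Y`. -/
theorem T0_nonentailment_witness (n i : ℕ) (hi : i ≤ n) (D : ELC CN RN)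
    (h : ¬ Entails (T0 n) (.cn (.X i)) D) :
    ∃ (ts : List RN) (Y : ELC CN RN), ts.length ≤ n - i + 1 ∧
      (Y = .top ∨ ∃ a : CN, Y = .cn a) ∧
      Entails [] D (exSeq ts Y) ∧
      ¬ Entails (T0 n) (.cn (.X i)) (exSeq ts Y) := by
  have hiD : i ∉ (canI n).sem D := fun hmem => h (canI_forward n D i hi hmem)
  obtain ⟨ts, Y, h1, h2, h3, h4⟩ := canI_backward n D i hi hiD
  refine ⟨ts, Y, h1, h2, h3, fun hent => h4 ?_⟩
  exact hent (canI n) (canI_model n) (show i ∈ (canI n).sem (.cn (.X i)) from rfl)
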